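/- If square integer matrices A (n×n) and B (m×m) are shift equivalent over Z, then the cokernel groups Z^n/(I−A)Z^n and Z^m/(I−B)Z^m are isomorphic as abelian groups. -/
import Mathlib


open Matrix

/-- For a square integer matrix `M`, the vector `M^ℓ x - x` lies in the range of
multiplication by `1 - M` (geometric-sum factorization). -/
lemma pow_mulVec_sub_self_mem (k : ℕ) (M : Matrix (Fin k) (Fin k) ℤ) (ℓ : ℕ)
    (x : Fin k → ℤ) :
    (M ^ ℓ).mulVec x - x ∈ LinearMap.range (1 - M).mulVecLin := by
  have hgeom : (1 - M) * (∑ i ∈ Finset.range ℓ, M ^ i) = 1 - M ^ ℓ := by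
    have h := mul_geom_sum (x := M) (n := ℓ)
    have h2 : (1 - M) * (∑ i ∈ Finset.range ℓ, M ^ i)
        = -((M - 1) * ∑ i ∈ Finset.range ℓ, M ^ i) := by noncomm_ring
    rw [h2, h]; noncomm_ring
  refine ⟨-((∑ i ∈ Finset.range ℓ, M ^ i).mulVec x), ?_⟩
  rw [mulVecLin_apply, Matrix.mulVec_neg, Matrix.mulVec_mulVec, hgeom,
    Matrix.sub_mulVec, Matrix.one_mulVec, neg_sub]

/-- If `S * P = Q * S` then `S` maps the range of `P` into the range of `Q`. -/
lemma range_le_comap_of_intertwine {k l : ℕ}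
    (S : Matrix (Fin l) (Fin k) ℤ) (P : Matrix (Fin k) (Fin k) ℤ)
    (Q : Matrix (Fin l) (Fin l) ℤ) (h : S * P = Q * S) :
    LinearMap.range P.mulVecLin ≤
      Submodule.comap S.mulVecLin (LinearMap.range Q.mulVecLin) := by
  rintro _ ⟨y, rfl⟩
  refine ⟨S.mulVec y, ?_⟩
  simp only [mulVecLin_apply, Matrix.mulVec_mulVec, h]

/-- shift equivalent integer matrices have isomorphic cokernel
groups `ℤⁿ/(I−A)ℤⁿ` and `ℤᵐ/(I−B)ℤᵐ`. -/
theorem shiftEquiv_cokernel_iso (n m : ℕ)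
    (A : Matrix (Fin n) (Fin n) ℤ) (B : Matrix (Fin m) (Fin m) ℤ)
    (hSE : ∃ (ℓ : ℕ) (R₀ : Matrix (Fin n) (Fin m) ℤ) (S : Matrix (Fin m) (Fin n) ℤ),
      0 < ℓ ∧ A ^ ℓ = R₀ * S ∧ B ^ ℓ = S * R₀ ∧ A * R₀ = R₀ * B ∧ S * A = B * S) :
    Nonempty
      (((Fin n → ℤ) ⧸ LinearMap.range ((1 - A).mulVecLin)) ≃+
        ((Fin m → ℤ) ⧸ LinearMap.range ((1 - B).mulVecLin))) := by
  obtain ⟨ℓ, R₀, S, hℓ, hAℓ, hBℓ, hAR, hSA⟩ := hSE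
  set pA := LinearMap.range (1 - A).mulVecLin with hpA
  set pB := LinearMap.range (1 - B).mulVecLin with hpB
  have hS : S * (1 - A) = (1 - B) * S := by
    rw [Matrix.mul_sub, Matrix.sub_mul, Matrix.mul_one, Matrix.one_mul, hSA]
  have hR : R₀ * (1 - B) = (1 - A) * R₀ := by
    rw [Matrix.mul_sub, Matrix.sub_mul, Matrix.mul_one, Matrix.one_mul, hAR]
  have hSle := range_le_comap_of_intertwine S (1 - A) (1 - B) hS
  have hRle := range_le_comap_of_intertwine R₀ (1 - B) (1 - A) hR
  let F : ((Fin n → ℤ) ⧸ pA) →ₗ[ℤ] ((Fin m → ℤ) ⧸ pB) :=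
    Submodule.mapQ pA pB S.mulVecLin hSle
  let G : ((Fin m → ℤ) ⧸ pB) →ₗ[ℤ] ((Fin n → ℤ) ⧸ pA) :=
    Submodule.mapQ pB pA R₀.mulVecLin hRle
  have hGF : G.comp F = LinearMap.id := by
    refine Submodule.linearMap_qext _ (LinearMap.ext fun x => ?_)
    simp only [LinearMap.comp_apply, Submodule.mkQ_apply, Submodule.mapQ_apply,
      mulVecLin_apply, LinearMap.id_apply, F, G]
    rw [Submodule.Quotient.eq]
    have := pow_mulVec_sub_self_mem n A ℓ x
    rwa [hAℓ, ← Matrix.mulVec_mulVec] at this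
  have hFG : F.comp G = LinearMap.id := by
    refine Submodule.linearMap_qext _ (LinearMap.ext fun x => ?_)
    simp only [LinearMap.comp_apply, Submodule.mkQ_apply, Submodule.mapQ_apply,
      mulVecLin_apply, LinearMap.id_apply, F, G]
    rw [Submodule.Quotient.eq]
    have := pow_mulVec_sub_self_mem m B ℓ x
    rwa [hBℓ, ← Matrix.mulVec_mulVec] at this
  exact ⟨(LinearEquiv.ofLinear F G hFG hGF).toAddEquiv⟩
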